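/- The 3×3 partial symmetric matrix with given entries A₁₁=1, A₁₂=1, A₁₃=2, A₂₂=1, A₂₃=3 and missing (3,3)-entry is not CP-completable: for every value t of the (3,3)-entry, the completed matrix has determinant −1 and hence is not positive semidefinite, so it is not completely positive. However, its maximum principal submatrix [[1,1],[1,1]] is completely positive. -/
import Mathlib


/-- A real `n × n` matrix is completely positive if `C = B * Bᵀ` for some
entrywise nonnegative matrix `B`. -/
def IsCP {n : ℕ} (C : Matrix (Fin n) (Fin n) ℝ) : Prop :=
  ∃ (m : ℕ) (B : Matrix (Fin n) (Fin m) ℝ), (∀ i j, 0 ≤ B i j) ∧ C = B * B.transpose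

lemma psd_det_nonneg {n : ℕ} {C : Matrix (Fin n) (Fin n) ℝ} (h : C.PosSemidef) :
    0 ≤ C.det := by
  rw [h.isHermitian.det_eq_prod_eigenvalues]
  exact Finset.prod_nonneg fun i _ => h.eigenvalues_nonneg i

lemma isCP_posSemidef {n : ℕ} {C : Matrix (Fin n) (Fin n) ℝ} (h : IsCP C) :
    C.PosSemidef := by
  obtain ⟨m, B, -, rfl⟩ := h
  simpa using Matrix.posSemidef_self_mul_conjTranspose B

/-- The partial matrix of (3.2) is not CP-completable: for every value `t` of
the missing `(3,3)`-entry the completed matrix has determinant `-1`, hence is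
not positive semidefinite and not completely positive.  Nevertheless its
maximum principal submatrix `[[1,1],[1,1]]` is completely positive. -/
theorem counterexample_partial_cp_completable :
    (∀ t : ℝ,
      (!![1, 1, 2; 1, 1, 3; 2, 3, t] : Matrix (Fin 3) (Fin 3) ℝ).det = -1 ∧
      ¬ (!![1, 1, 2; 1, 1, 3; 2, 3, t] : Matrix (Fin 3) (Fin 3) ℝ).PosSemidef ∧
      ¬ IsCP !![1, 1, 2; 1, 1, 3; 2, 3, t]) ∧
    IsCP !![(1 : ℝ), 1; 1, 1] := by
  constructor
  · intro t
    have hdet : (!![1, 1, 2; 1, 1, 3; 2, 3, t] : Matrix (Fin 3) (Fin 3) ℝ).det = -1 := by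
      simp [Matrix.det_fin_three]; ring
    refine ⟨hdet, ?_, ?_⟩
    · intro h
      have := psd_det_nonneg h
      rw [hdet] at this; linarith
    · intro h
      have := psd_det_nonneg (isCP_posSemidef h)
      rw [hdet] at this; linarith
  · refine ⟨1, !![1; 1], ?_, ?_⟩
    · intro i j; fin_cases i <;> fin_cases j <;> norm_num
    · ext i j; fin_cases i <;> fin_cases j <;>
        simp [Matrix.mul_apply, Fin.sum_univ_succ, Matrix.transpose, Matrix.vecHead, Matrix.vecTail]
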